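/- Assume ∂κ/∂u and ∂²κ/∂u² exist and are continuous on Ω. Let δ₀ > 0, let φ : [a,b] → ℝ be bounded, let q ≥ 1 be a constant such that ‖Q_n v‖_∞ ≤ q·‖v‖_∞ for every bounded v : [a,b] → ℝ, and set C₆' = sup{|∂²κ/∂u²(s,t,u)| : s,t ∈ [a,b], |u| ≤ q·(‖φ‖_∞ + δ₀)}. Then for all bounded x, y ∈ B(φ,δ₀): ‖K̃_n^M(x) − K̃_n^M(y) − (K̃_n^M)'(y)(x − y)‖_∞ ≤ (1/2) · C₆' · (b−a) · q·(1 + q + q²) · W · ‖x − y‖_∞². -/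

import Mathlib

open Set

noncomputable section

/-- Supremum of `|x|` over `[a, b]`. -/
def supIcc (a b : ℝ) (x : ℝ → ℝ) : ℝ := ⨆ t : Set.Icc a b, |x t.1|

/-- `x` is bounded on `[a, b]`. -/
def BddIcc (a b : ℝ) (x : ℝ → ℝ) : Prop := ∃ M, ∀ t ∈ Set.Icc a b, |x t| ≤ M

/-- The quadrature rule `(w, μ)` on `[0,1]` has degree of precision at least `k`:
it integrates exactly all polynomials of degree at most `k`. -/
def Precision {ρ : ℕ} (w μ : Fin ρ → ℝ) (k : ℕ) : Prop :=
  ∀ P : Polynomial ℝ, P.natDegree ≤ k →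
    ∑ i, w i * P.eval (μ i) = ∫ t in (0:ℝ)..1, P.eval t

/-- `Ψ(t) = ∏ i (t - q i)`. -/
def Psi {r : ℕ} (q : Fin r → ℝ) (t : ℝ) : ℝ := ∏ i, (t - q i)

/-- `q` lists the Gauss points of order `r` in `(0,1)`. -/
def GaussPts {r : ℕ} (q : Fin r → ℝ) : Prop :=
  StrictMono q ∧ (∀ i, q i ∈ Set.Ioo (0:ℝ) 1) ∧
    ∀ j, j < r → ∫ t in (0:ℝ)..1, t ^ j * Psi q t = 0

/-- Quadrature nodes `ζ_i^{j+1}` of the composite rule, `j = 0, …, m-1`. -/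
def qNode {ρ : ℕ} (a b : ℝ) (μ : Fin ρ → ℝ) (m j : ℕ) (i : Fin ρ) : ℝ :=
  a + (j : ℝ) * ((b - a) / m) + μ i * ((b - a) / m)

/-- Nyström operator, linear kernel. -/
def nystL {ρ : ℕ} (a b : ℝ) (w μ : Fin ρ → ℝ) (m : ℕ) (κ : ℝ → ℝ → ℝ) (x : ℝ → ℝ) :
    ℝ → ℝ := fun s =>
  ((b - a) / m) *
    ∑ j ∈ Finset.range m, ∑ i, w i * κ s (qNode a b μ m j i) * x (qNode a b μ m j i)

/-- Nyström operator, Urysohn kernel. -/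
def nystU {ρ : ℕ} (a b : ℝ) (w μ : Fin ρ → ℝ) (m : ℕ) (κ : ℝ → ℝ → ℝ → ℝ) (x : ℝ → ℝ) :
    ℝ → ℝ := fun s =>
  ((b - a) / m) *
    ∑ j ∈ Finset.range m, ∑ i, w i * κ s (qNode a b μ m j i) (x (qNode a b μ m j i))

/-- Fréchet derivative `K_m'(x) v` of the Nyström operator. -/
def nystU' {ρ : ℕ} (a b : ℝ) (w μ : Fin ρ → ℝ) (m : ℕ) (κ : ℝ → ℝ → ℝ → ℝ) (x v : ℝ → ℝ) :
    ℝ → ℝ := fun s =>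
  ((b - a) / m) *
    ∑ j ∈ Finset.range m, ∑ i,
      w i * deriv (κ s (qNode a b μ m j i)) (x (qNode a b μ m j i)) * v (qNode a b μ m j i)

/-- Collocation nodes `τ_i^{k+1}`, `k = 0, …, n-1`. -/
def cNode {r : ℕ} (a b : ℝ) (q : Fin r → ℝ) (n k : ℕ) (i : Fin r) : ℝ :=
  a + (k : ℝ) * ((b - a) / n) + q i * ((b - a) / n)

/-- Index of the subinterval of the uniform partition of `[a,b]` containing `t`. -/
def iIdx (a b : ℝ) (n : ℕ) (t : ℝ) : ℕ :=
  min (n - 1) (⌊(t - a) / ((b - a) / n)⌋.toNat)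

/-- Piecewise-polynomial interpolatory projection at the `r` Gauss points of each
subinterval of the uniform partition of `[a,b]` into `n` parts. -/
def projQ {r : ℕ} (a b : ℝ) (q : Fin r → ℝ) (n : ℕ) (x : ℝ → ℝ) : ℝ → ℝ := fun t =>
  (Lagrange.interpolate Finset.univ (cNode a b q n (iIdx a b n t))
    fun i => x (cNode a b q n (iIdx a b n t) i)).eval t

/-- Discrete modified projection operator, linear case. -/
def modL {ρ r : ℕ} (a b : ℝ) (w μ : Fin ρ → ℝ) (q : Fin r → ℝ) (n m : ℕ)
    (κ : ℝ → ℝ → ℝ) (x : ℝ → ℝ) : ℝ → ℝ :=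
  projQ a b q n (nystL a b w μ m κ x) + nystL a b w μ m κ (projQ a b q n x)
    - projQ a b q n (nystL a b w μ m κ (projQ a b q n x))

/-- Discrete modified projection operator, Urysohn case. -/
def modU {ρ r : ℕ} (a b : ℝ) (w μ : Fin ρ → ℝ) (q : Fin r → ℝ) (n m : ℕ)
    (κ : ℝ → ℝ → ℝ → ℝ) (x : ℝ → ℝ) : ℝ → ℝ :=
  projQ a b q n (nystU a b w μ m κ x) + nystU a b w μ m κ (projQ a b q n x)
    - projQ a b q n (nystU a b w μ m κ (projQ a b q n x))

/-- Fréchet derivative of `modU` at `x`, applied to `v`. -/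
def modU' {ρ r : ℕ} (a b : ℝ) (w μ : Fin ρ → ℝ) (q : Fin r → ℝ) (n m : ℕ)
    (κ : ℝ → ℝ → ℝ → ℝ) (x v : ℝ → ℝ) : ℝ → ℝ :=
  projQ a b q n (nystU' a b w μ m κ x v)
    + nystU' a b w μ m κ (projQ a b q n x) (projQ a b q n v)
    - projQ a b q n (nystU' a b w μ m κ (projQ a b q n x) (projQ a b q n v))

/-- `‖x‖_{k,∞}`. -/
def CkNorm (a b : ℝ) (k : ℕ) (x : ℝ → ℝ) : ℝ :=
  ⨆ p : Fin (k + 1) × Set.Icc a b, |iteratedDeriv (p.1 : ℕ) x p.2.1|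

/-- Mixed partial derivative `∂^{i+j} κ / ∂s^i ∂t^j`. -/
def pder (i j : ℕ) (κ : ℝ → ℝ → ℝ) (s t : ℝ) : ℝ :=
  iteratedDeriv i (fun s' => iteratedDeriv j (κ s') t) s

/-- `‖κ‖_{k,∞}`. -/
def kerNorm (a b : ℝ) (k : ℕ) (κ : ℝ → ℝ → ℝ) : ℝ :=
  ⨆ p : {ij : ℕ × ℕ // ij.1 + ij.2 ≤ k} × (Set.Icc a b × Set.Icc a b),
    |pder p.1.1.1 p.1.1.2 κ p.2.1.1 p.2.2.1|

/-- `W = ∑ |w i|`. -/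
def Wsum {ρ : ℕ} (w : Fin ρ → ℝ) : ℝ := ∑ i, |w i|

/-- `∂κ/∂u`, Urysohn kernel. -/
def du (κ : ℝ → ℝ → ℝ → ℝ) (s t u : ℝ) : ℝ := deriv (κ s t) u

/-- `∂²κ/∂u²`, Urysohn kernel. -/
def du2 (κ : ℝ → ℝ → ℝ → ℝ) (s t u : ℝ) : ℝ := deriv (deriv (κ s t)) u

/-- supremum of `|g(s,t,u)|` over `s, t ∈ [a,b]`, `|u| ≤ B`. -/
def supU (a b B : ℝ) (g : ℝ → ℝ → ℝ → ℝ) : ℝ :=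
  ⨆ v : Set.Icc a b × Set.Icc a b × Set.Icc (-B) B, |g v.1.1 v.2.1.1 v.2.2.1|

/-- `∂κ/∂u` exists everywhere and is continuous. -/
def Smooth1 (κ : ℝ → ℝ → ℝ → ℝ) : Prop :=
  (∀ s t : ℝ, Differentiable ℝ (κ s t)) ∧
    Continuous fun v : ℝ × ℝ × ℝ => du κ v.1 v.2.1 v.2.2

/-- `∂²κ/∂u²` exists everywhere and is continuous. -/
def Smooth2 (κ : ℝ → ℝ → ℝ → ℝ) : Prop :=
  (∀ s t : ℝ, Differentiable ℝ (deriv (κ s t))) ∧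
    Continuous fun v : ℝ × ℝ × ℝ => du2 κ v.1 v.2.1 v.2.2


/-! ### Auxiliary lemmas -/

lemma le_supIcc {a b : ℝ} {x : ℝ → ℝ} {M : ℝ} (hM : ∀ t ∈ Set.Icc a b, |x t| ≤ M)
    {t : ℝ} (ht : t ∈ Set.Icc a b) : |x t| ≤ supIcc a b x :=
  le_ciSup (f := fun t : Set.Icc a b => |x t.1|)
    ⟨M, by rintro _ ⟨u, rfl⟩; exact hM u u.2⟩ (⟨t, ht⟩ : Set.Icc a b)

lemma supIcc_le {a b : ℝ} (hab : a ≤ b) {x : ℝ → ℝ} {M : ℝ}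
    (hM : ∀ t ∈ Set.Icc a b, |x t| ≤ M) : supIcc a b x ≤ M := by
  haveI : Nonempty (Set.Icc a b) := (Set.nonempty_Icc.2 hab).to_subtype
  exact ciSup_le fun t => hM t t.2

lemma taylor2 {f : ℝ → ℝ} (hf : Differentiable ℝ f) (hf' : Differentiable ℝ (deriv f))
    {C X Y : ℝ} (hC : ∀ u ∈ Set.uIcc X Y, |deriv (deriv f) u| ≤ C) :
    |f X - f Y - deriv f Y * (X - Y)| ≤ C / 2 * (X - Y) ^ 2 := by
  set d := X - Y with hd
  have hmem : ∀ t ∈ Set.Icc (0:ℝ) 1, Y + t * d ∈ Set.uIcc X Y := by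
    intro t ht
    rw [Set.uIcc_comm, ← segment_eq_uIcc]
    exact ⟨1 - t, t, by linarith [ht.2], ht.1, by ring, by simp only [smul_eq_mul, hd]; ring⟩
  have lip : ∀ t ∈ Set.Icc (0:ℝ) 1, |deriv f (Y + t * d) - deriv f Y| ≤ C * (t * |d|) := by
    intro t ht
    have h := Convex.norm_image_sub_le_of_norm_deriv_le (s := Set.uIcc X Y)
      (fun u _ => hf' u) (fun u hu => hC u hu) (convex_uIcc X Y)
      Set.right_mem_uIcc (hmem t ht)
    have h2 : Y + t * d - Y = t * d := by ring
    rw [Real.norm_eq_abs, Real.norm_eq_abs, h2, abs_mul, abs_of_nonneg ht.1] at h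
    exact h
  have hg : ∀ t : ℝ, HasDerivAt (fun t => f (Y + t * d)) (deriv f (Y + t * d) * d) t := by
    intro t
    have h1 : HasDerivAt (fun t : ℝ => Y + t * d) d t := by
      simpa using ((hasDerivAt_id t).mul_const d).const_add Y
    exact (hf (Y + t * d)).hasDerivAt.comp t h1
  have hcont : Continuous fun t : ℝ => deriv f (Y + t * d) * d :=
    (hf'.continuous.comp (by continuity)).mul continuous_const
  have hint : f X - f Y = ∫ t in (0:ℝ)..1, deriv f (Y + t * d) * d := by
    have h := intervalIntegral.integral_eq_sub_of_hasDerivAt (a := (0:ℝ)) (b := 1)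
      (fun t _ => hg t) (hcont.intervalIntegrable 0 1)
    have e1 : Y + 1 * d = X := by rw [hd]; ring
    have e0 : Y + 0 * d = Y := by ring
    rw [h]
    simp only [e1, e0]
  have hrepr : f X - f Y - deriv f Y * d
      = ∫ t in (0:ℝ)..1, (deriv f (Y + t * d) - deriv f Y) * d := by
    have hc2 : (∫ t in (0:ℝ)..1, deriv f Y * d) = deriv f Y * d := by simp
    rw [hint, ← hc2,
      ← intervalIntegral.integral_sub (hcont.intervalIntegrable 0 1)
        (intervalIntegrable_const)]
    apply intervalIntegral.integral_congr
    intro t _; ring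
  have habs : Continuous fun t : ℝ => (deriv f (Y + t * d) - deriv f Y) * d :=
    ((hf'.continuous.comp (by continuity)).sub continuous_const).mul continuous_const
  calc |f X - f Y - deriv f Y * d|
      ≤ ∫ t in (0:ℝ)..1, |(deriv f (Y + t * d) - deriv f Y) * d| := by
        rw [hrepr]
        have h := intervalIntegral.norm_integral_le_integral_norm (μ := MeasureTheory.volume)
          (f := fun t : ℝ => (deriv f (Y + t * d) - deriv f Y) * d) (zero_le_one)
        simp only [Real.norm_eq_abs] at h
        exact h
    _ ≤ ∫ t in (0:ℝ)..1, C * t * (|d| * |d|) := by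
        apply intervalIntegral.integral_mono_on zero_le_one
          (habs.abs.intervalIntegrable 0 1) ((by continuity : Continuous fun t : ℝ =>
            C * t * (|d| * |d|)).intervalIntegrable 0 1)
        intro t ht
        calc |(deriv f (Y + t * d) - deriv f Y) * d|
            = |deriv f (Y + t * d) - deriv f Y| * |d| := abs_mul _ _
          _ ≤ C * (t * |d|) * |d| :=
              mul_le_mul_of_nonneg_right (lip t ht) (abs_nonneg d)
          _ = C * t * (|d| * |d|) := by ring
    _ = C / 2 * (X - Y) ^ 2 := by
        have e : (∫ t in (0:ℝ)..1, C * t * (|d| * |d|))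
            = (C * (|d| * |d|)) * ∫ t in (0:ℝ)..1, t := by
          rw [← intervalIntegral.integral_const_mul]
          apply intervalIntegral.integral_congr
          intro t _; ring
        rw [e, integral_id, abs_mul_abs_self, hd]
        ring

lemma qNode_mem {ρ : ℕ} {a b : ℝ} (hab : a < b) {μ : Fin ρ → ℝ}
    (hμ : ∀ i, μ i ∈ Set.Ioo (0:ℝ) 1) {m j : ℕ} (hj : j < m) (i : Fin ρ) :
    qNode a b μ m j i ∈ Set.Icc a b := by
  have hm0 : (0:ℝ) < m := by exact_mod_cast Nat.lt_of_le_of_lt (Nat.zero_le j) hj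
  have hh : 0 < (b - a) / m := div_pos (by linarith) hm0
  have hmb : (m : ℝ) * ((b - a) / m) = b - a := by field_simp
  have hjm : (j : ℝ) + 1 ≤ m := by exact_mod_cast hj
  constructor
  · have : 0 ≤ (j : ℝ) * ((b - a) / m) := mul_nonneg (Nat.cast_nonneg j) hh.le
    have : 0 ≤ μ i * ((b - a) / m) := mul_nonneg (hμ i).1.le hh.le
    unfold qNode
    nlinarith [mul_nonneg (Nat.cast_nonneg j : (0:ℝ) ≤ j) hh.le]
  · unfold qNode
    nlinarith [(hμ i).2, mul_le_mul_of_nonneg_right hjm hh.le]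

lemma nyst_taylor {ρ : ℕ} {a b : ℝ} (hab : a < b) (w μ : Fin ρ → ℝ)
    (hμ : ∀ i, μ i ∈ Set.Ioo (0:ℝ) 1) {m : ℕ} (hm : 1 ≤ m)
    {κ : ℝ → ℝ → ℝ → ℝ} (h1 : Smooth1 κ) (h2 : Smooth2 κ)
    {B C D : ℝ} (hC0 : 0 ≤ C) (hD0 : 0 ≤ D)
    (hC : ∀ s ∈ Set.Icc a b, ∀ t ∈ Set.Icc a b, ∀ u : ℝ, |u| ≤ B → |du2 κ s t u| ≤ C)
    {X Y v : ℝ → ℝ}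
    (hX : ∀ t ∈ Set.Icc a b, |X t| ≤ B) (hY : ∀ t ∈ Set.Icc a b, |Y t| ≤ B)
    (hD : ∀ t ∈ Set.Icc a b, |X t - Y t| ≤ D)
    (hv : ∀ t ∈ Set.Icc a b, v t = X t - Y t)
    {s : ℝ} (hs : s ∈ Set.Icc a b) :
    |nystU a b w μ m κ X s - nystU a b w μ m κ Y s - nystU' a b w μ m κ Y v s|
      ≤ (b - a) * Wsum w * (C / 2 * D ^ 2) := by
  have hh : 0 ≤ (b - a) / m := div_nonneg (by linarith) (Nat.cast_nonneg m)
  have key : ∀ j ∈ Finset.range m, ∀ i : Fin ρ,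
      |w i * κ s (qNode a b μ m j i) (X (qNode a b μ m j i))
        - w i * κ s (qNode a b μ m j i) (Y (qNode a b μ m j i))
        - w i * deriv (κ s (qNode a b μ m j i)) (Y (qNode a b μ m j i))
            * v (qNode a b μ m j i)|
      ≤ |w i| * (C / 2 * D ^ 2) := by
    intro j hj i
    have hjm : j < m := Finset.mem_range.mp hj
    set ζ := qNode a b μ m j i with hζdef
    have hζ : ζ ∈ Set.Icc a b := qNode_mem hab hμ hjm i
    have hT : |κ s ζ (X ζ) - κ s ζ (Y ζ) - deriv (κ s ζ) (Y ζ) * (X ζ - Y ζ)|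
        ≤ C / 2 * (X ζ - Y ζ) ^ 2 := by
      apply taylor2 (h1.1 s ζ) (h2.1 s ζ)
      intro u hu
      have hXB := hX ζ hζ
      have hYB := hY ζ hζ
      have h1' : -(B) ≤ X ζ ⊓ Y ζ := le_inf (neg_le_of_abs_le hXB) (neg_le_of_abs_le hYB)
      have h2' : X ζ ⊔ Y ζ ≤ B := sup_le (le_of_abs_le hXB) (le_of_abs_le hYB)
      exact hC s hs ζ hζ u (abs_le.2 ⟨le_trans h1' hu.1, le_trans hu.2 h2'⟩)
    have hsq : (X ζ - Y ζ) ^ 2 ≤ D ^ 2 := by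
      have := hD ζ hζ
      have := abs_le.mp this
      nlinarith
    have hT2 : |κ s ζ (X ζ) - κ s ζ (Y ζ) - deriv (κ s ζ) (Y ζ) * (X ζ - Y ζ)|
        ≤ C / 2 * D ^ 2 :=
      le_trans hT (by nlinarith)
    calc |w i * κ s ζ (X ζ) - w i * κ s ζ (Y ζ)
          - w i * deriv (κ s ζ) (Y ζ) * v ζ|
        = |w i| * |κ s ζ (X ζ) - κ s ζ (Y ζ) - deriv (κ s ζ) (Y ζ) * (X ζ - Y ζ)| := by
          rw [← abs_mul, hv ζ hζ]; ring_nf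
      _ ≤ |w i| * (C / 2 * D ^ 2) := mul_le_mul_of_nonneg_left hT2 (abs_nonneg _)
  have hsum : nystU a b w μ m κ X s - nystU a b w μ m κ Y s - nystU' a b w μ m κ Y v s
      = ((b - a) / m) * ∑ j ∈ Finset.range m, ∑ i : Fin ρ,
          (w i * κ s (qNode a b μ m j i) (X (qNode a b μ m j i))
            - w i * κ s (qNode a b μ m j i) (Y (qNode a b μ m j i))
            - w i * deriv (κ s (qNode a b μ m j i)) (Y (qNode a b μ m j i))
                * v (qNode a b μ m j i)) := by
    simp only [nystU, nystU', Finset.sum_sub_distrib, mul_sub]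
  rw [hsum, abs_mul, abs_of_nonneg hh]
  calc ((b - a) / m) * |∑ j ∈ Finset.range m, ∑ i : Fin ρ, _|
      ≤ ((b - a) / m) * ∑ j ∈ Finset.range m, ∑ i : Fin ρ, (|w i| * (C / 2 * D ^ 2)) := by
        apply mul_le_mul_of_nonneg_left _ hh
        calc |∑ j ∈ Finset.range m, ∑ i : Fin ρ, _|
            ≤ ∑ j ∈ Finset.range m, |∑ i : Fin ρ, _| := Finset.abs_sum_le_sum_abs _ _
          _ ≤ ∑ j ∈ Finset.range m, ∑ i : Fin ρ, (|w i| * (C / 2 * D ^ 2)) := by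
              apply Finset.sum_le_sum
              intro j hj
              exact le_trans (Finset.abs_sum_le_sum_abs _ _)
                (Finset.sum_le_sum fun i _ => key j hj i)
    _ = (b - a) * Wsum w * (C / 2 * D ^ 2) := by
        have hmne : (m : ℝ) ≠ 0 := by
          have : (0:ℝ) < m := by exact_mod_cast hm
          linarith
        simp only [← Finset.sum_mul, Finset.sum_const, Finset.card_range, nsmul_eq_mul]
        rw [← Wsum]
        field_simp
  done

lemma projQ_sub3 {r : ℕ} (a b : ℝ) (q : Fin r → ℝ) (n : ℕ) (u v w : ℝ → ℝ) (t : ℝ) :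
    projQ a b q n u t - projQ a b q n v t - projQ a b q n w t
      = projQ a b q n (fun z => u z - v z - w z) t := by
  simp only [projQ]
  rw [show (fun i => (fun z => u z - v z - w z) (cNode a b q n (iIdx a b n t) i))
      = ((fun i => u (cNode a b q n (iIdx a b n t) i))
        - fun i => v (cNode a b q n (iIdx a b n t) i))
        - fun i => w (cNode a b q n (iIdx a b n t) i) from rfl,
    map_sub, map_sub, Polynomial.eval_sub, Polynomial.eval_sub]

lemma projQ_sub {r : ℕ} (a b : ℝ) (q : Fin r → ℝ) (n : ℕ) (u v : ℝ → ℝ) (t : ℝ) :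
    projQ a b q n u t - projQ a b q n v t = projQ a b q n (fun z => u z - v z) t := by
  simp only [projQ]
  rw [show (fun i => (fun z => u z - v z) (cNode a b q n (iIdx a b n t) i))
      = ((fun i => u (cNode a b q n (iIdx a b n t) i))
        - fun i => v (cNode a b q n (iIdx a b n t) i)) from rfl,
    map_sub, Polynomial.eval_sub]

/-- Proposition 5.6: second-order Taylor bound for `K̃ₙᴹ`. -/
theorem stmt17 {ρ r : ℕ} (hr : 1 ≤ r) (w μ : Fin ρ → ℝ)
    (hμ : ∀ i, μ i ∈ Set.Ioo (0:ℝ) 1) (hprec : Precision w μ (2 * r - 1))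
    (q : Fin r → ℝ) (hq : GaussPts q) (a b : ℝ) (hab : a < b)
    (κ : ℝ → ℝ → ℝ → ℝ)
    (hκ : Continuous fun v : ℝ × ℝ × ℝ => κ v.1 v.2.1 v.2.2)
    (h1 : Smooth1 κ) (h2 : Smooth2 κ)
    (δ₀ : ℝ) (hδ₀ : 0 < δ₀) (φ : ℝ → ℝ) (hφ : BddIcc a b φ)
    (n m : ℕ) (hn : 1 ≤ n) (hm : 1 ≤ m)
    (qc : ℝ) (hqc : 1 ≤ qc)
    (hqn : ∀ v : ℝ → ℝ, BddIcc a b v →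
      ∀ t ∈ Set.Icc a b, |projQ a b q n v t| ≤ qc * supIcc a b v)
    (x y : ℝ → ℝ)
    (hx : ∀ t ∈ Set.Icc a b, |x t - φ t| ≤ δ₀)
    (hy : ∀ t ∈ Set.Icc a b, |y t - φ t| ≤ δ₀) :
    ∀ s ∈ Set.Icc a b,
      |modU a b w μ q n m κ x s - modU a b w μ q n m κ y s
          - modU' a b w μ q n m κ y (x - y) s| ≤
        1 / 2 * supU a b (qc * (supIcc a b φ + δ₀)) (du2 κ) * (b - a) *
          (qc * (1 + qc + qc ^ 2)) * Wsum w * supIcc a b (x - y) ^ 2 := by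
  intro s hs
  obtain ⟨Mf, hMf⟩ := hφ
  have habl : a ≤ b := hab.le
  have haIcc : a ∈ Set.Icc a b := ⟨le_refl a, habl⟩
  have hφle : ∀ t ∈ Set.Icc a b, |φ t| ≤ supIcc a b φ := fun t ht => le_supIcc hMf ht
  have hMφ0 : 0 ≤ supIcc a b φ := le_trans (abs_nonneg _) (hφle a haIcc)
  set Mφ := supIcc a b φ with hMφ
  set B := qc * (Mφ + δ₀) with hBdef
  have hqc0 : (0:ℝ) ≤ qc := by linarith
  have hB0 : 0 ≤ B := by nlinarith
  have hxb : ∀ t ∈ Set.Icc a b, |x t| ≤ Mφ + δ₀ := by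
    intro t ht
    have h1' := hx t ht
    have h2' := hφle t ht
    have h3 : |x t| ≤ |x t - φ t| + |φ t| := by
      have := abs_add_le (x t - φ t) (φ t)
      simpa using this
    linarith
  have hyb : ∀ t ∈ Set.Icc a b, |y t| ≤ Mφ + δ₀ := by
    intro t ht
    have h1' := hy t ht
    have h2' := hφle t ht
    have h3 : |y t| ≤ |y t - φ t| + |φ t| := by
      have := abs_add_le (y t - φ t) (φ t)
      simpa using this
    linarith
  have hxB : ∀ t ∈ Set.Icc a b, |x t| ≤ B := fun t ht => by nlinarith [hxb t ht]
  have hyB : ∀ t ∈ Set.Icc a b, |y t| ≤ B := fun t ht => by nlinarith [hyb t ht]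
  have hdxy : ∀ t ∈ Set.Icc a b, |(x - y) t| ≤ 2 * δ₀ := by
    intro t ht
    have h1' := hx t ht
    have h2' := hy t ht
    simp only [Pi.sub_apply]
    calc |x t - y t| = |(x t - φ t) - (y t - φ t)| := by ring_nf
      _ ≤ |x t - φ t| + |y t - φ t| := abs_sub _ _
      _ ≤ 2 * δ₀ := by linarith
  set D := supIcc a b (x - y) with hDdef
  have hDle : ∀ t ∈ Set.Icc a b, |x t - y t| ≤ D := by
    intro t ht
    have h := le_supIcc hdxy ht
    simpa using h
  have hD0 : 0 ≤ D := le_trans (abs_nonneg _) (hDle a haIcc)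
  set Cc := supU a b B (du2 κ) with hCcdef
  have hCle : ∀ s' ∈ Set.Icc a b, ∀ t ∈ Set.Icc a b, ∀ u : ℝ, |u| ≤ B →
      |du2 κ s' t u| ≤ Cc := by
    intro s' hs' t ht u hu
    have hBdd : BddAbove (Set.range fun v : Set.Icc a b × Set.Icc a b × Set.Icc (-B) B =>
        |du2 κ v.1.1 v.2.1.1 v.2.2.1|) := by
      haveI : CompactSpace (Set.Icc a b) := isCompact_iff_compactSpace.mp isCompact_Icc
      haveI : CompactSpace (Set.Icc (-B) B) := isCompact_iff_compactSpace.mp isCompact_Icc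
      apply IsCompact.bddAbove
      apply isCompact_range
      apply Continuous.abs
      exact h2.2.comp ((continuous_subtype_val.comp continuous_fst).prodMk
        ((continuous_subtype_val.comp (continuous_fst.comp continuous_snd)).prodMk
          (continuous_subtype_val.comp (continuous_snd.comp continuous_snd))))
    exact le_ciSup hBdd ⟨⟨s', hs'⟩, ⟨t, ht⟩, ⟨u, Set.mem_Icc.mpr (abs_le.mp hu)⟩⟩
  have hC0 : 0 ≤ Cc :=
    le_trans (abs_nonneg _) (hCle a haIcc a haIcc 0 (by simpa using hB0))
  have hbddx : BddIcc a b x := ⟨Mφ + δ₀, hxb⟩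
  have hbddy : BddIcc a b y := ⟨Mφ + δ₀, hyb⟩
  have hsupx : supIcc a b x ≤ Mφ + δ₀ := supIcc_le habl hxb
  have hsupy : supIcc a b y ≤ Mφ + δ₀ := supIcc_le habl hyb
  have hQxB : ∀ t ∈ Set.Icc a b, |projQ a b q n x t| ≤ B := fun t ht =>
    le_trans (hqn x hbddx t ht) (by nlinarith)
  have hQyB : ∀ t ∈ Set.Icc a b, |projQ a b q n y t| ≤ B := fun t ht =>
    le_trans (hqn y hbddy t ht) (by nlinarith)
  have hbddxy : BddIcc a b (x - y) := ⟨2 * δ₀, hdxy⟩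
  have hQxyD : ∀ t ∈ Set.Icc a b, |projQ a b q n x t - projQ a b q n y t| ≤ qc * D := by
    intro t ht
    rw [projQ_sub]
    have h := hqn (x - y) hbddxy t ht
    rw [← hDdef] at h
    exact h
  have hv2 : ∀ t ∈ Set.Icc a b, projQ a b q n (x - y) t
      = projQ a b q n x t - projQ a b q n y t :=
    fun t _ => (projQ_sub a b q n x y t).symm
  have hR1 : ∀ t ∈ Set.Icc a b,
      |nystU a b w μ m κ x t - nystU a b w μ m κ y t
        - nystU' a b w μ m κ y (x - y) t|
      ≤ (b - a) * Wsum w * (Cc / 2 * D ^ 2) :=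
    fun t ht => nyst_taylor hab w μ hμ hm h1 h2 hC0 hD0 hCle hxB hyB hDle
      (fun t _ => rfl) ht
  have hqD0 : 0 ≤ qc * D := mul_nonneg hqc0 hD0
  have hR2 : ∀ t ∈ Set.Icc a b,
      |nystU a b w μ m κ (projQ a b q n x) t - nystU a b w μ m κ (projQ a b q n y) t
        - nystU' a b w μ m κ (projQ a b q n y) (projQ a b q n (x - y)) t|
      ≤ (b - a) * Wsum w * (Cc / 2 * (qc * D) ^ 2) :=
    fun t ht => nyst_taylor hab w μ hμ hm h1 h2 hC0 hqD0 hCle hQxB hQyB hQxyD hv2 ht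
  have key : modU a b w μ q n m κ x s - modU a b w μ q n m κ y s
      - modU' a b w μ q n m κ y (x - y) s
      = projQ a b q n (fun z => nystU a b w μ m κ x z - nystU a b w μ m κ y z
          - nystU' a b w μ m κ y (x - y) z) s
        + (nystU a b w μ m κ (projQ a b q n x) s - nystU a b w μ m κ (projQ a b q n y) s
          - nystU' a b w μ m κ (projQ a b q n y) (projQ a b q n (x - y)) s)
        - projQ a b q n (fun z => nystU a b w μ m κ (projQ a b q n x) z
            - nystU a b w μ m κ (projQ a b q n y) z
            - nystU' a b w μ m κ (projQ a b q n y) (projQ a b q n (x - y)) z) s := by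
    have e1 := projQ_sub3 a b q n (nystU a b w μ m κ x) (nystU a b w μ m κ y)
      (nystU' a b w μ m κ y (x - y)) s
    have e2 := projQ_sub3 a b q n (nystU a b w μ m κ (projQ a b q n x))
      (nystU a b w μ m κ (projQ a b q n y))
      (nystU' a b w μ m κ (projQ a b q n y) (projQ a b q n (x - y))) s
    simp only [modU, modU', Pi.add_apply, Pi.sub_apply]
    linarith [e1, e2]
  rw [key]
  set R1 : ℝ → ℝ := fun z => nystU a b w μ m κ x z - nystU a b w μ m κ y z
    - nystU' a b w μ m κ y (x - y) z with hR1def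
  set R2 : ℝ → ℝ := fun z => nystU a b w μ m κ (projQ a b q n x) z
    - nystU a b w μ m κ (projQ a b q n y) z
    - nystU' a b w μ m κ (projQ a b q n y) (projQ a b q n (x - y)) z with hR2def
  have hPQ1 : |projQ a b q n R1 s| ≤ qc * supIcc a b R1 :=
    hqn R1 ⟨(b - a) * Wsum w * (Cc / 2 * D ^ 2), hR1⟩ s hs
  have hPQ2 : |projQ a b q n R2 s| ≤ qc * supIcc a b R2 :=
    hqn R2 ⟨(b - a) * Wsum w * (Cc / 2 * (qc * D) ^ 2), hR2⟩ s hs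
  have hS1 : supIcc a b R1 ≤ (b - a) * Wsum w * (Cc / 2 * D ^ 2) := supIcc_le habl hR1
  have hS2 : supIcc a b R2 ≤ (b - a) * Wsum w * (Cc / 2 * (qc * D) ^ 2) :=
    supIcc_le habl hR2
  have b1 : |projQ a b q n R1 s| ≤ qc * ((b - a) * Wsum w * (Cc / 2 * D ^ 2)) :=
    le_trans hPQ1 (mul_le_mul_of_nonneg_left hS1 hqc0)
  have b3 : |projQ a b q n R2 s| ≤ qc * ((b - a) * Wsum w * (Cc / 2 * (qc * D) ^ 2)) :=
    le_trans hPQ2 (mul_le_mul_of_nonneg_left hS2 hqc0)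
  have b2 : |R2 s| ≤ (b - a) * Wsum w * (Cc / 2 * (qc * D) ^ 2) := hR2 s hs
  have hmid : nystU a b w μ m κ (projQ a b q n x) s - nystU a b w μ m κ (projQ a b q n y) s
      - nystU' a b w μ m κ (projQ a b q n y) (projQ a b q n (x - y)) s = R2 s := rfl
  rw [hmid]
  clear_value R1 R2 Cc D B Mφ
  have etri : projQ a b q n R1 s + R2 s - projQ a b q n R2 s
      = (projQ a b q n R1 s + R2 s) + -(projQ a b q n R2 s) := by ring
  have t2 := abs_add_le (projQ a b q n R1 s) (R2 s)
  have t1 := abs_add_le (projQ a b q n R1 s + R2 s) (-(projQ a b q n R2 s))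
  rw [abs_neg] at t1
  calc |projQ a b q n R1 s + R2 s - projQ a b q n R2 s|
      ≤ |projQ a b q n R1 s| + |R2 s| + |projQ a b q n R2 s| := by
        rw [etri]; linarith
    _ ≤ qc * ((b - a) * Wsum w * (Cc / 2 * D ^ 2))
        + (b - a) * Wsum w * (Cc / 2 * (qc * D) ^ 2)
        + qc * ((b - a) * Wsum w * (Cc / 2 * (qc * D) ^ 2)) := by linarith
    _ = 1 / 2 * Cc * (b - a) * (qc * (1 + qc + qc ^ 2)) * Wsum w * D ^ 2 := by ring


end
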